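/- arXiv:2306.08567 — 5 statements merged into one kernel-verified Lean document; each statement's English description precedes it below -/
import Mathlib

section
/- Let G be a finite abelian group, B a regular Bohr set in G of dimension d, and B' a subset of the dilate B_δ where δ ≤ ε/(24d). Then the L1 distance between μ_B * μ_{B'} and μ_B is at most ε, where μ_X denotes the normalized indicator function 1_X/|X| and * denotes convolution. -/
open scoped Classical BigOperators Pointwise

variable {G : Type*} [AddCommGroup G] [Fintype G]

/-- The Bohr set `Bohr(Γ, ρ) = {x : |1 - γ(x)| ≤ ρ for all γ ∈ Γ}`. -/
noncomputable def bohr (Γ : Finset (AddChar G ℂ)) (ρ : ℝ) : Finset G :=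
  Finset.univ.filter fun x => ∀ γ ∈ Γ, ‖1 - γ x‖ ≤ ρ

/-- Regularity of the Bohr set `Bohr(Γ, ρ)` (dimension `d = Γ.card`). -/
noncomputable def BohrRegular (Γ : Finset (AddChar G ℂ)) (ρ : ℝ) : Prop :=
  ∀ δ : ℝ, |δ| ≤ 1 / (12 * Γ.card) →
    (1 - 12 * Γ.card * |δ|) * (bohr Γ ρ).card ≤ ((bohr Γ (ρ * (1 + δ))).card : ℝ) ∧
    ((bohr Γ (ρ * (1 + δ))).card : ℝ) ≤ (1 + 12 * Γ.card * |δ|) * (bohr Γ ρ).card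

/-- Indicator function of a finite set. -/
noncomputable def ind (A : Finset G) : G → ℝ := fun x => if x ∈ A then 1 else 0

/-- Normalized indicator `μ_A = 1_A / |A|`. -/
noncomputable def mu (A : Finset G) : G → ℝ := fun x => (if x ∈ A then 1 else 0) / A.card

/-- Convolution `(f * g)(x) = ∑ t, f t * g (x - t)`. -/
noncomputable def conv (f g : G → ℝ) : G → ℝ := fun x => ∑ t, f t * g (x - t)

/-- `L¹` norm. -/
noncomputable def l1 (f : G → ℝ) : ℝ := ∑ x, |f x|

lemma mem_bohr_iff {Γ : Finset (AddChar G ℂ)} {ρ : ℝ} {x : G} :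
    x ∈ bohr Γ ρ ↔ ∀ γ ∈ Γ, ‖1 - γ x‖ ≤ ρ := by
  simp [bohr]

lemma zero_mem_bohr {Γ : Finset (AddChar G ℂ)} {ρ : ℝ} (hρ : 0 ≤ ρ) : (0 : G) ∈ bohr Γ ρ := by
  rw [mem_bohr_iff]; intro γ hγ; simp [AddChar.map_zero_eq_one, hρ]

lemma bohr_mono {Γ : Finset (AddChar G ℂ)} {r s : ℝ} (h : r ≤ s) : bohr Γ r ⊆ bohr Γ s := by
  intro x hx; rw [mem_bohr_iff] at *; exact fun γ hγ => (hx γ hγ).trans h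

lemma bohr_add {Γ : Finset (AddChar G ℂ)} {r s : ℝ} {x y : G}
    (hx : x ∈ bohr Γ r) (hy : y ∈ bohr Γ s) : x + y ∈ bohr Γ (r + s) := by
  rw [mem_bohr_iff] at *
  intro γ hγ
  have key : (1 : ℂ) - γ (x + y) = (1 - γ x) + γ x * (1 - γ y) := by
    rw [AddChar.map_add_eq_mul]; ring
  rw [key]
  calc ‖(1 - γ x) + γ x * (1 - γ y)‖
      ≤ ‖1 - γ x‖ + ‖γ x * (1 - γ y)‖ := norm_add_le _ _
    _ = ‖1 - γ x‖ + ‖1 - γ y‖ := by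
        rw [norm_mul, AddChar.norm_apply, one_mul]
    _ ≤ r + s := add_le_add (hx γ hγ) (hy γ hγ)

lemma bohr_neg {Γ : Finset (AddChar G ℂ)} {r : ℝ} {x : G} (hx : x ∈ bohr Γ r) :
    -x ∈ bohr Γ r := by
  rw [mem_bohr_iff] at *
  intro γ hγ
  have h1 : γ (-x) * γ x = 1 := by
    rw [← AddChar.map_add_eq_mul, neg_add_cancel, AddChar.map_zero_eq_one]
  have key : (1 : ℂ) - γ (-x) = γ (-x) * (γ x - 1) := by
    rw [mul_sub, h1]; ring
  rw [key, norm_mul, AddChar.norm_apply, one_mul,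
    ← norm_neg, neg_sub]
  exact hx γ hγ

lemma ind_nonneg (A : Finset G) (x : G) : 0 ≤ ind A x := by
  unfold ind; split <;> norm_num

lemma ind_le_one (A : Finset G) (x : G) : ind A x ≤ 1 := by
  unfold ind; split <;> norm_num

lemma mu_nonneg (A : Finset G) (x : G) : 0 ≤ mu A x := by
  unfold mu; split
  · positivity
  · norm_num

lemma sum_ind (A : Finset G) : ∑ x, ind A x = A.card := by
  unfold ind
  rw [Finset.sum_ite_mem, Finset.univ_inter, Finset.sum_const, nsmul_eq_mul, mul_one]

lemma sum_mu {A : Finset G} (hA : A.Nonempty) : ∑ x, mu A x = 1 := by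
  have hc : (0 : ℝ) < A.card := by exact_mod_cast Finset.card_pos.mpr hA
  have hrw : ∀ x, mu A x = ind A x / A.card := fun x => rfl
  simp_rw [hrw]
  rw [← Finset.sum_div, sum_ind, div_self (ne_of_gt hc)]

lemma sum_shift (f : G → ℝ) (t : G) : ∑ x, f (x - t) = ∑ x, f x :=
  Fintype.sum_equiv (Equiv.subRight t) _ _ (fun _ => rfl)

/-- Pointwise bound: `|1_B(x-t) - 1_B(x)| ≤ 1_U(x) - 1_L(x)`. -/
lemma ind_diff_bound {Γ : Finset (AddChar G ℂ)} {ρ δ : ℝ} (hρ : 0 < ρ) (hδ0 : 0 < δ)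
    {t : G} (ht : t ∈ bohr Γ (ρ * δ)) (x : G) :
    |ind (bohr Γ ρ) (x - t) - ind (bohr Γ ρ) x|
      ≤ ind (bohr Γ (ρ * (1 + δ))) x - ind (bohr Γ (ρ * (1 - δ))) x := by
  set B := bohr Γ ρ
  set U := bohr Γ (ρ * (1 + δ))
  set L := bohr Γ (ρ * (1 - δ))
  have hLB : L ⊆ B := bohr_mono (by nlinarith)
  have hBU : B ⊆ U := bohr_mono (by nlinarith)
  by_cases hxL : x ∈ L
  · have hxB : x ∈ B := hLB hxL
    have hxtB : x - t ∈ B := by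
      have h := bohr_add hxL (bohr_neg ht)
      rw [← sub_eq_add_neg] at h
      exact bohr_mono (le_of_eq (by ring)) h
    simp [ind, hxB, hxtB, hxL, hBU hxB]
  by_cases hxU : x ∈ U
  · have h1 := ind_nonneg B (x - t); have h2 := ind_le_one B (x - t)
    have h3 := ind_nonneg B x; have h4 := ind_le_one B x
    have h5 : ind U x = 1 := by simp [ind, hxU]
    have h6 : ind L x = 0 := by simp [ind, hxL]
    rw [h5, h6, abs_sub_le_iff]
    constructor <;> linarith
  · have hxB : x ∉ B := fun h => hxU (hBU h)
    have hxtB : x - t ∉ B := by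
      intro h
      have h' := bohr_add h ht
      rw [sub_add_cancel] at h'
      exact hxU (bohr_mono (le_of_eq (by ring)) h')
    simp [ind, hxB, hxtB, hxU, hxL]

/-- For a regular Bohr set `B` of dimension `d` and `B' ⊆ B_δ` with
`δ ≤ ε/(24d)`, we have `‖μ_B * μ_{B'} - μ_B‖₁ ≤ ε`. -/
theorem bohr_convolution_l1 {G : Type*} [AddCommGroup G] [Fintype G]
    (Γ : Finset (AddChar G ℂ)) (ρ ε δ : ℝ) (hρ : 0 < ρ) (hρ2 : ρ ≤ 2)
    (hreg : BohrRegular Γ ρ) (hd : 0 < Γ.card)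
    (B' : Finset G) (hB'sub : B' ⊆ bohr Γ (ρ * δ)) (hB'ne : B'.Nonempty)
    (hδ0 : 0 < δ) (hδ : δ ≤ ε / (24 * Γ.card)) :
    l1 (fun x => conv (mu (bohr Γ ρ)) (mu B') x - mu (bohr Γ ρ) x) ≤ ε := by
  set d : ℝ := (Γ.card : ℝ) with hd_def
  have hdpos : (0 : ℝ) < d := by rw [hd_def]; exact_mod_cast hd
  set B := bohr Γ ρ with hB_def
  have hBne : B.Nonempty := ⟨0, zero_mem_bohr hρ.le⟩
  have hBcard : (0 : ℝ) < B.card := by exact_mod_cast Finset.card_pos.mpr hBne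
  have hB'card : (0 : ℝ) < B'.card := by exact_mod_cast Finset.card_pos.mpr hB'ne
  have hεδ : 24 * d * δ ≤ ε := by
    rw [div_eq_mul_inv] at hδ
    have h24 : (0:ℝ) < 24 * d := by positivity
    calc 24 * d * δ ≤ 24 * d * (ε * (24 * d)⁻¹) := by
          exact mul_le_mul_of_nonneg_left hδ h24.le
      _ = ε := by field_simp
  have hε0 : 0 < ε := lt_of_lt_of_le (by positivity) hεδ
  -- rewrite convolution
  have hconv : ∀ x, conv (mu B) (mu B') x = ∑ t, mu B' t * mu B (x - t) := by
    intro x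
    unfold conv
    refine Fintype.sum_equiv (Equiv.subLeft x) _ _ (fun t => ?_)
    simp only [Equiv.subLeft_apply, sub_sub_cancel]
    ring
  have hpt : ∀ x, conv (mu B) (mu B') x - mu B x
      = ∑ t, mu B' t * (mu B (x - t) - mu B x) := by
    intro x
    have h1 : ∑ t, mu B' t * (mu B (x - t) - mu B x)
        = (∑ t, mu B' t * mu B (x - t)) - (∑ t, mu B' t) * mu B x := by
      rw [Finset.sum_mul, ← Finset.sum_sub_distrib]
      exact Finset.sum_congr rfl fun t _ => by ring
    rw [hconv x, h1, sum_mu hB'ne, one_mul]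
  have habs : ∀ x, |conv (mu B) (mu B') x - mu B x|
      ≤ ∑ t, mu B' t * |mu B (x - t) - mu B x| := by
    intro x
    rw [hpt x]
    refine (Finset.abs_sum_le_sum_abs _ _).trans (Finset.sum_le_sum fun t _ => ?_)
    rw [abs_mul, abs_of_nonneg (mu_nonneg B' t)]
  -- main case analysis
  by_cases hε2 : ε ≤ 2
  · -- nontrivial case: use regularity
    have hδsmall : δ ≤ 1 / (12 * d) := by
      have h2 : ε / (24 * d) ≤ 2 / (24 * d) := by gcongr
      calc δ ≤ ε / (24 * d) := hδ
        _ ≤ 2 / (24 * d) := h2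
        _ = 1 / (12 * d) := by ring
    have habsδ : |δ| = δ := abs_of_pos hδ0
    have hU := (hreg δ (by rw [habsδ]; exact hδsmall)).2
    have hL := (hreg (-δ) (by rw [abs_neg, habsδ]; exact hδsmall)).1
    rw [habsδ] at hU
    rw [abs_neg, habsδ] at hL
    set U := bohr Γ (ρ * (1 + δ)) with hU_def
    set L := bohr Γ (ρ * (1 - δ)) with hL_def
    have hL' : (1 - 12 * d * δ) * B.card ≤ (L.card : ℝ) := by
      have : ρ * (1 + -δ) = ρ * (1 - δ) := by ring
      rwa [this] at hL
    -- translate bound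
    have hS : ∀ t ∈ B', ∑ x, |mu B (x - t) - mu B x| ≤ 24 * d * δ := by
      intro t htB'
      have ht : t ∈ bohr Γ (ρ * δ) := hB'sub htB'
      have key : ∀ x, |mu B (x - t) - mu B x| ≤ (ind U x - ind L x) / B.card := by
        intro x
        have : mu B (x - t) - mu B x = (ind B (x - t) - ind B x) / B.card := by
          unfold mu ind; ring
        rw [this, abs_div, abs_of_pos hBcard]
        gcongr
        exact ind_diff_bound hρ hδ0 ht x
      calc ∑ x, |mu B (x - t) - mu B x| ≤ ∑ x, (ind U x - ind L x) / B.card :=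
            Finset.sum_le_sum fun x _ => key x
        _ = ((U.card : ℝ) - L.card) / B.card := by
            rw [← Finset.sum_div, Finset.sum_sub_distrib, sum_ind, sum_ind]
        _ ≤ 24 * d * δ := by
            rw [div_le_iff₀ hBcard]
            nlinarith [hU, hL']
    calc l1 (fun x => conv (mu B) (mu B') x - mu B x)
        ≤ ∑ x, ∑ t, mu B' t * |mu B (x - t) - mu B x| :=
          Finset.sum_le_sum fun x _ => habs x
      _ = ∑ t, mu B' t * ∑ x, |mu B (x - t) - mu B x| := by
          rw [Finset.sum_comm]
          exact Finset.sum_congr rfl fun t _ => by rw [Finset.mul_sum]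
      _ ≤ ∑ t, mu B' t * ε := by
          refine Finset.sum_le_sum fun t _ => ?_
          by_cases htB' : t ∈ B'
          · exact mul_le_mul_of_nonneg_left ((hS t htB').trans hεδ) (mu_nonneg B' t)
          · have : mu B' t = 0 := by simp [mu, htB']
            simp [this]
      _ = ε := by rw [← Finset.sum_mul, sum_mu hB'ne, one_mul]
  · -- trivial case ε > 2
    push_neg at hε2
    have hconvsum : ∑ x, conv (mu B) (mu B') x = 1 := by
      unfold conv
      rw [Finset.sum_comm]
      calc ∑ t, ∑ x, mu B t * mu B' (x - t)
          = ∑ t, mu B t * ∑ x, mu B' (x - t) := by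
            exact Finset.sum_congr rfl fun t _ => by rw [Finset.mul_sum]
        _ = ∑ t, mu B t := by
            refine Finset.sum_congr rfl fun t _ => ?_
            rw [sum_shift (mu B') t, sum_mu hB'ne, mul_one]
        _ = 1 := sum_mu hBne
    have hconvnn : ∀ x, 0 ≤ conv (mu B) (mu B') x := by
      intro x
      exact Finset.sum_nonneg fun t _ => mul_nonneg (mu_nonneg _ _) (mu_nonneg _ _)
    calc l1 (fun x => conv (mu B) (mu B') x - mu B x)
        ≤ ∑ x, (conv (mu B) (mu B') x + mu B x) := by
          refine Finset.sum_le_sum fun x _ => ?_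
          show |conv (mu B) (mu B') x - mu B x| ≤ _
          calc |conv (mu B) (mu B') x - mu B x|
              ≤ |conv (mu B) (mu B') x| + |mu B x| := abs_sub _ _
            _ = conv (mu B) (mu B') x + mu B x := by
                rw [abs_of_nonneg (hconvnn x), abs_of_nonneg (mu_nonneg B x)]
      _ = 2 := by rw [Finset.sum_add_distrib, hconvsum, sum_mu hBne]; norm_num
      _ ≤ ε := hε2.le
end

section
/- Let p be prime, B ⊆ ℤ/pℤ a regular Bohr set of dimension d, A ⊆ B with |A| = α|B|, and suppose δ ≤ α/(240d) satisfies |B_{1+δ}| ≤ 1.01|B|. Then there exists x ∈ ℤ/pℤ such that |A ∩ (x + B_δ)| ≥ 0.9 α |B_δ|. -/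
open scoped Classical BigOperators Pointwise

variable {G : Type*} [AddCommGroup G] [Fintype G]

lemma char_abs_one (γ : AddChar G ℂ) (x : G) :
    ‖γ x‖ = 1 := by
  exact AddChar.norm_apply γ x

lemma char_tri (γ : AddChar G ℂ) (u v : G) :
    ‖1 - γ (u + v)‖ ≤ ‖1 - γ u‖ + ‖1 - γ v‖ := by
  have h : (1 - γ (u + v) : ℂ) = (1 - γ u) + γ u * (1 - γ v) := by
    rw [AddChar.map_add_eq_mul]; ring
  rw [h]
  refine (norm_add_le _ _).trans ?_
  rw [norm_mul, char_abs_one, one_mul]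

lemma char_neg (γ : AddChar G ℂ) (u : G) :
    ‖1 - γ (-u)‖ = ‖1 - γ u‖ := by
  have h1 : γ (-u) * γ u = 1 := by
    rw [← AddChar.map_add_eq_mul, neg_add_cancel, AddChar.map_zero_eq_one]
  have h : (1 - γ (-u) : ℂ) = γ (-u) * (γ u - 1) := by
    rw [mul_sub, h1]; ring
  rw [h, norm_mul, char_abs_one, one_mul]
  have : (γ u - 1 : ℂ) = -(1 - γ u) := by ring
  rw [this, norm_neg]

/-- a dense subset `A` of a regular Bohr set `B` has a translate of the
dilate `B_δ` (with `δ ≤ α/(240d)`, `|B_{1+δ}| ≤ 1.01|B|`) in which `A` has density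
at least `0.9α`. -/
theorem high_density_small_bohr_set (p : ℕ) [Fact p.Prime]
    (Γ : Finset (AddChar (ZMod p) ℂ)) (ρ α δ : ℝ) (hρ0 : 0 < ρ) (hρ2 : ρ ≤ 2)
    (hreg : BohrRegular Γ ρ) (A : Finset (ZMod p)) (hA : A ⊆ bohr Γ ρ)
    (hAcard : (A.card : ℝ) = α * (bohr Γ ρ).card) (hα : 0 < α)
    (hδ0 : 0 < δ) (hδ : δ ≤ α / (240 * Γ.card))
    (hgrow : ((bohr Γ (ρ * (1 + δ))).card : ℝ) ≤ 1.01 * (bohr Γ ρ).card) :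
    ∃ x : ZMod p, 0.9 * α * ((bohr Γ (ρ * δ)).card : ℝ) ≤
      (((bohr Γ (ρ * δ)).filter (fun b => x + b ∈ A)).card : ℝ) := by
  classical
  set B := bohr Γ ρ with hB
  set S := bohr Γ (ρ * δ) with hS
  set T := bohr Γ (ρ * (1 + δ)) with hT
  -- 0 ∈ T, so T nonempty
  have hTne : T.Nonempty := by
    refine ⟨0, ?_⟩
    simp only [hT, bohr, Finset.mem_filter, Finset.mem_univ, true_and]
    intro γ hγ
    rw [AddChar.map_zero_eq_one, sub_self, norm_zero]
    positivity
  have hTpos : (0 : ℝ) < T.card := by exact_mod_cast Finset.card_pos.mpr hTne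
  -- support: if the count at x is nonzero then x ∈ T
  have hsupp : ∀ x : ZMod p, x ∉ T → (S.filter fun b => x + b ∈ A) = ∅ := by
    intro x hx
    by_contra hne
    obtain ⟨b, hb⟩ := Finset.nonempty_iff_ne_empty.mpr hne
    rw [Finset.mem_filter] at hb
    obtain ⟨hbS, hbA⟩ := hb
    apply hx
    simp only [hT, bohr, Finset.mem_filter, Finset.mem_univ, true_and]
    intro γ hγ
    have h1 : ‖1 - γ (x + b)‖ ≤ ρ := by
      have := hA hbA
      simp only [hB, bohr, Finset.mem_filter] at this
      exact this.2 γ hγ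
    have h2 : ‖1 - γ b‖ ≤ ρ * δ := by
      simp only [hS, bohr, Finset.mem_filter] at hbS
      exact hbS.2 γ hγ
    have h3 : x = (x + b) + (-b) := by abel
    calc ‖1 - γ x‖ = ‖1 - γ ((x + b) + (-b))‖ := by rw [← h3]
      _ ≤ ‖1 - γ (x + b)‖ + ‖1 - γ (-b)‖ := char_tri γ _ _
      _ = ‖1 - γ (x + b)‖ + ‖1 - γ b‖ := by rw [char_neg]
      _ ≤ ρ + ρ * δ := add_le_add h1 h2
      _ = ρ * (1 + δ) := by ring
  -- double counting
  have hsum : ∑ x : ZMod p, ((S.filter fun b => x + b ∈ A).card : ℝ)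
      = (S.card : ℝ) * A.card := by
    have h1 : ∀ x : ZMod p, ((S.filter fun b => x + b ∈ A).card : ℝ)
        = ∑ b ∈ S, (if x + b ∈ A then (1 : ℝ) else 0) := by
      intro x
      rw [Finset.card_filter]
      push_cast
      rfl
    simp_rw [h1]
    rw [Finset.sum_comm]
    have h2 : ∀ b : ZMod p, ∑ x : ZMod p, (if x + b ∈ A then (1 : ℝ) else 0)
        = (A.card : ℝ) := by
      intro b
      rw [Fintype.sum_bijective (· + b) (Equiv.addRight b).bijective _
        (fun y => if y ∈ A then (1:ℝ) else 0) (fun x => rfl)]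
      rw [← Finset.sum_filter, Finset.sum_const, Finset.filter_mem_eq_inter,
        Finset.univ_inter]
      simp
    simp_rw [h2]
    rw [Finset.sum_const, nsmul_eq_mul]
  -- restrict the sum to T
  have hsumT : ∑ x ∈ T, ((S.filter fun b => x + b ∈ A).card : ℝ)
      = (S.card : ℝ) * A.card := by
    rw [← hsum]
    apply Finset.sum_subset (Finset.subset_univ T)
    intro x _ hx
    rw [hsupp x hx]
    simp
  -- averaging
  obtain ⟨x, _, hx⟩ := Finset.exists_le_of_sum_le hTne
    (f := fun _ => (S.card : ℝ) * A.card / T.card)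
    (g := fun x => ((S.filter fun b => x + b ∈ A).card : ℝ))
    (by rw [hsumT, Finset.sum_const, nsmul_eq_mul, mul_div_cancel₀ _ (ne_of_gt hTpos)])
  refine ⟨x, le_trans ?_ hx⟩
  rw [le_div_iff₀ hTpos, hAcard]
  have hS0 : (0 : ℝ) ≤ S.card := Nat.cast_nonneg _
  have hB0 : (0 : ℝ) ≤ B.card := Nat.cast_nonneg _
  nlinarith [mul_nonneg (mul_nonneg hα.le hS0) hB0, mul_le_mul_of_nonneg_left hgrow (mul_nonneg hα.le hS0)]
end

section
/- Let B ⊆ ℤ/pℤ be a regular Bohr set of dimension d and A ⊆ B with |A| = α|B|, and let ε > 0. Given subsets B^1, …, B^k ⊆ ℤ/pℤ with ||μ_B * μ_{B^i} − μ_B||_1 ≤ εα/k for each i, there exists x ∈ B such that Σ_{i=1}^k (μ_{B^i} * 1_A)(x) ≥ (k − ε) α. Consequently, if additionally ||μ_{B^i} * 1_A||_∞ ≤ (1 + 1/(16k)) α for all i and ε = 1/16, then for every i, (μ_{B^i} * 1_A)(x) ≥ (7/8) α. -/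
open scoped Classical BigOperators Pointwise

variable {G : Type*} [AddCommGroup G] [Fintype G]

lemma conv_comm' (f g : G → ℝ) (x : G) : conv f g x = conv g f x := by
  show ∑ t, f t * g (x - t) = ∑ t, g t * f (x - t)
  rw [← Equiv.sum_comp (Equiv.subLeft x) (fun t => g t * f (x - t))]
  simp [mul_comm]

lemma neg_mem_bohr (Γ : Finset (AddChar G ℂ)) (ρ : ℝ) (x : G)
    (hx : x ∈ bohr Γ ρ) : -x ∈ bohr Γ ρ := by
  simp only [bohr, Finset.mem_filter, Finset.mem_univ, true_and] at *
  intro γ hγ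
  rw [AddChar.map_neg_eq_inv, AddChar.inv_apply_eq_conj]
  have h1 : (starRingEnd ℂ) (1 - γ x) = 1 - (starRingEnd ℂ) (γ x) := by
    rw [map_sub, map_one]
  rw [← h1, Complex.norm_conj]
  exact hx γ hγ

lemma mem_bohr_neg_iff (Γ : Finset (AddChar G ℂ)) (ρ : ℝ) (x : G) :
    -x ∈ bohr Γ ρ ↔ x ∈ bohr Γ ρ :=
  ⟨fun h => by simpa using neg_mem_bohr Γ ρ (-x) h, neg_mem_bohr Γ ρ x⟩


/-- the averaging core of the coefficient-dilation lemma. If each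
`μ_B * μ_{B^i}` is `εα/k`-close to `μ_B` in `L¹`, then some `x ∈ B` has
`∑ i (μ_{B^i} * 1_A)(x) ≥ (k - ε)α`; consequently, if moreover
`‖μ_{B^i} * 1_A‖_∞ ≤ (1 + 1/(16k))α` for all `i` and `ε = 1/16`, then
`(μ_{B^i} * 1_A)(x) ≥ (7/8)α` for every `i`. -/
theorem averaging_core (p : ℕ) [Fact p.Prime]
    (Γ : Finset (AddChar (ZMod p) ℂ)) (ρ α ε : ℝ) (hρ0 : 0 < ρ) (hρ2 : ρ ≤ 2)
    (hreg : BohrRegular Γ ρ) (A : Finset (ZMod p)) (hA : A ⊆ bohr Γ ρ)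
    (hAcard : (A.card : ℝ) = α * (bohr Γ ρ).card) (hα : 0 < α) (hε : 0 < ε)
    (k : ℕ) (hk : 0 < k) (Bi : Fin k → Finset (ZMod p))
    (hclose : ∀ i, l1 (fun x => conv (mu (bohr Γ ρ)) (mu (Bi i)) x - mu (bohr Γ ρ) x)
      ≤ ε * α / k) :
    ∃ x ∈ bohr Γ ρ,
      ((k : ℝ) - ε) * α ≤ (∑ i, conv (mu (Bi i)) (ind A) x) ∧
      (ε = 1 / 16 →
        (∀ i, ∀ y, conv (mu (Bi i)) (ind A) y ≤ (1 + 1 / (16 * k)) * α) →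
        ∀ i, 7 / 8 * α ≤ conv (mu (Bi i)) (ind A) x) := by
  classical
  set B := bohr Γ ρ with hBdef
  have h0B : (0 : ZMod p) ∈ B := by
    simp [hBdef, bohr, hρ0.le]
  have hBne : B.Nonempty := ⟨0, h0B⟩
  have hBcard : (0:ℝ) < B.card := by exact_mod_cast Finset.card_pos.mpr hBne
  have hsym : ∀ x : ZMod p, mu B (-x) = mu B x := by
    intro x
    simp only [mu, hBdef, mem_bohr_neg_iff]
  set F : ZMod p → ℝ := fun x => ∑ i, conv (mu (Bi i)) (ind A) x with hF
  -- the per-i average estimate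
  have key : ∀ i, α - ε * α / k ≤ ∑ x, mu B x * conv (mu (Bi i)) (ind A) x := by
    intro i
    set d : ZMod p → ℝ := fun x => conv (mu B) (mu (Bi i)) x - mu B x with hd
    have stepA : ∑ x, mu B x * conv (mu (Bi i)) (ind A) x
        = ∑ a ∈ A, conv (mu B) (mu (Bi i)) (-a) := by
      have e1 : ∀ x : ZMod p, mu B x * conv (mu (Bi i)) (ind A) x
          = ∑ t, mu B x * (mu (Bi i) t * ind A (x - t)) := by
        intro x; rw [conv, Finset.mul_sum]
      rw [Finset.sum_congr rfl fun x _ => e1 x, Finset.sum_comm]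
      have e2 : ∀ t : ZMod p, ∑ x, mu B x * (mu (Bi i) t * ind A (x - t))
          = ∑ a ∈ A, mu B (a + t) * mu (Bi i) t := by
        intro t
        rw [← Equiv.sum_comp (Equiv.addRight t)
          (fun x => mu B x * (mu (Bi i) t * ind A (x - t)))]
        simp only [Equiv.coe_addRight, add_sub_cancel_right]
        rw [Finset.sum_congr rfl (fun a _ => by
          show mu B (a + t) * (mu (Bi i) t * ind A a)
            = if a ∈ A then mu B (a + t) * mu (Bi i) t else 0
          by_cases ha : a ∈ A <;> simp [ind, ha])]
        rw [Finset.sum_ite_mem, Finset.univ_inter]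
      rw [Finset.sum_congr rfl fun t _ => e2 t, Finset.sum_comm]
      refine Finset.sum_congr rfl fun a _ => ?_
      rw [conv_comm']
      show ∑ t, mu B (a + t) * mu (Bi i) t = ∑ t, mu (Bi i) t * mu B (-a - t)
      refine Finset.sum_congr rfl fun t _ => ?_
      rw [show -a - t = -(a + t) by ring, hsym, mul_comm]
    have hmuA : ∑ a ∈ A, mu B a = α := by
      rw [Finset.sum_congr rfl (fun a ha => show mu B a = 1 / B.card by
        simp [mu, hA ha]), Finset.sum_const, nsmul_eq_mul, hAcard]
      field_simp
    have habs : ∑ a ∈ A, |d (-a)| ≤ ε * α / k := by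
      calc ∑ a ∈ A, |d (-a)| ≤ ∑ a, |d (-a)| :=
            Finset.sum_le_sum_of_subset_of_nonneg (Finset.subset_univ A)
              (fun _ _ _ => abs_nonneg _)
        _ = ∑ x, |d x| := Equiv.sum_comp (Equiv.neg (ZMod p)) (fun x => |d x|)
        _ ≤ ε * α / k := hclose i
    have hlow : ∑ a ∈ A, d (-a) ≥ -(ε * α / k) := by
      have h1 := Finset.sum_le_sum (fun a (_ : a ∈ A) => neg_abs_le (d (-a)))
      rw [Finset.sum_neg_distrib] at h1
      linarith [h1, habs]
    have : ∑ a ∈ A, conv (mu B) (mu (Bi i)) (-a)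
        = (∑ a ∈ A, mu B a) + ∑ a ∈ A, d (-a) := by
      rw [← Finset.sum_add_distrib]
      refine Finset.sum_congr rfl fun a _ => ?_
      simp [hd, hsym a]
    rw [stepA, this, hmuA]
    linarith
  -- total average
  have total : ((k : ℝ) - ε) * α ≤ ∑ x, mu B x * F x := by
    have e : ∑ x, mu B x * F x = ∑ i, ∑ x, mu B x * conv (mu (Bi i)) (ind A) x := by
      rw [Finset.sum_comm]
      exact Finset.sum_congr rfl fun x _ => by rw [hF, Finset.mul_sum]
    have hk' : (0:ℝ) < k := by exact_mod_cast hk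
    calc ((k : ℝ) - ε) * α = ∑ _i : Fin k, (α - ε * α / k) := by
          rw [Finset.sum_const, Finset.card_univ, Fintype.card_fin, nsmul_eq_mul]
          field_simp
      _ ≤ ∑ i, ∑ x, mu B x * conv (mu (Bi i)) (ind A) x :=
          Finset.sum_le_sum fun i _ => key i
      _ = ∑ x, mu B x * F x := e.symm
  -- pigeonhole
  have havg : ∑ x, mu B x * F x = ∑ x ∈ B, F x / B.card := by
    rw [← Finset.sum_subset (Finset.subset_univ B)
      (fun x _ hx => by simp [mu, hx])]
    exact Finset.sum_congr rfl fun x hx => by simp [mu, hx]; ring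
  have hsum : ∑ x ∈ B, (((k : ℝ) - ε) * α / B.card) ≤ ∑ x ∈ B, F x / B.card := by
    rw [Finset.sum_const, nsmul_eq_mul]
    rw [havg] at total
    calc (B.card : ℝ) * (((k : ℝ) - ε) * α / B.card) = ((k : ℝ) - ε) * α := by
          field_simp
      _ ≤ ∑ x ∈ B, F x / B.card := total
  obtain ⟨x, hxB, hx⟩ := Finset.exists_le_of_sum_le hBne hsum
  have hxF : ((k : ℝ) - ε) * α ≤ F x := by
    have := (div_le_div_iff_of_pos_right hBcard).mp hx
    linarith [this]
  refine ⟨x, hxB, hxF, ?_⟩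
  intro hε16 hsup i
  have hrest : ∑ j ∈ Finset.univ.erase i, conv (mu (Bi j)) (ind A) x
      ≤ ((k:ℝ) - 1) * ((1 + 1 / (16 * k)) * α) := by
    have := Finset.sum_le_card_nsmul (Finset.univ.erase i)
      (fun j => conv (mu (Bi j)) (ind A) x) ((1 + 1 / (16 * k)) * α)
      (fun j _ => hsup j x)
    rw [Finset.card_erase_of_mem (Finset.mem_univ i), Finset.card_univ,
      Fintype.card_fin, nsmul_eq_mul] at this
    calc ∑ j ∈ Finset.univ.erase i, conv (mu (Bi j)) (ind A) x
        ≤ ((k - 1 : ℕ) : ℝ) * ((1 + 1 / (16 * k)) * α) := this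
      _ = ((k:ℝ) - 1) * ((1 + 1 / (16 * k)) * α) := by
          rw [Nat.cast_sub hk]; norm_num
  have hsplit : F x = conv (mu (Bi i)) (ind A) x
      + ∑ j ∈ Finset.univ.erase i, conv (mu (Bi j)) (ind A) x := by
    rw [hF]
    exact (Finset.add_sum_erase _ _ (Finset.mem_univ i)).symm
  have hK1 : (1:ℝ) ≤ k := by exact_mod_cast hk
  have hxF' : ((k:ℝ) - 1/16) * α ≤ F x := by rw [← hε16]; exact hxF
  have hgoal : ((k:ℝ) - 1/16) * α - ((k:ℝ) - 1) * ((1 + 1 / (16 * k)) * α)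
      ≥ 7 / 8 * α := by
    have hk0 : (0:ℝ) < k := by linarith
    have expand : ((k:ℝ) - 1/16) * α - ((k:ℝ) - 1) * ((1 + 1 / (16 * (k:ℝ))) * α)
        - 7 / 8 * α = α / (16 * (k:ℝ)) := by
      field_simp
      ring
    have hpos : (0:ℝ) ≤ α / (16 * (k:ℝ)) := by positivity
    linarith [expand, hpos]
  linarith [hsplit, hrest, hxF', hgoal]
end

section
/- For every k ≥ 4 and all sufficiently small α > 0, there exist infinitely many integers N ≥ 1 and sets A ⊆ {1, 2, …, N} with |A| ≥ αN such that the number of tuples (x_1, …, x_k) ∈ A^k satisfying x_1 + x_2 + ⋯ + x_{k−1} = (k−1)x_k is at most exp(−c log²(2/α)) N^{k−1}, for an absolute constant c > 0. -/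
set_option maxHeartbeats 1000000

open scoped Classical BigOperators
open Finset Real

lemma myKsucc {k : ℕ} (hk : 4 ≤ k) : k - 1 = (k - 2) + 1 := by omega

lemma myCardI (k : ℕ) (hk : 1 ≤ k) :
    (Finset.univ.filter fun i : Fin k => (i : ℕ) < k - 1).card = k - 1 := by
  have h : (Finset.univ.filter fun i : Fin k => (i : ℕ) < k - 1)
      = Finset.map (Fin.castLEEmb (by omega : k - 1 ≤ k)) Finset.univ := by
    ext i
    simp only [mem_filter, mem_univ, true_and, Finset.mem_map, Fin.castLEEmb]
    constructor
    · intro hi; exact ⟨⟨i, hi⟩, by simp [Fin.castLE, Fin.ext_iff]⟩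
    · rintro ⟨j, hj, rfl⟩; simpa using j.2
  rw [h, Finset.card_map, card_univ, Fintype.card_fin]

lemma myArith {C u v s s' : ℕ} (h1 : 1 ≤ s) (h2 : s ≤ C) (h3 : 1 ≤ s') (h4 : s' ≤ C)
    (he : C * u + s = C * v + s') : u = v ∧ s = s' := by
  rcases Nat.lt_trichotomy u v with h | h | h
  · exfalso
    have : C * (u + 1) ≤ C * v := Nat.mul_le_mul_left C h
    have : C * u + C ≤ C * v := by rw [Nat.mul_add, Nat.mul_one] at this; omega
    omega
  · subst h; exact ⟨rfl, by omega⟩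
  · exfalso
    have : C * (v + 1) ≤ C * u := Nat.mul_le_mul_left C h
    have : C * v + C ≤ C * u := by rw [Nat.mul_add, Nat.mul_one] at this; omega
    omega

lemma myMapLt {n M : ℕ} (v : Fin n → ℕ) (hv : ∀ i, v i < M) :
    Behrend.map M v < M ^ n := by
  induction n with
  | zero => simpa [Behrend.map_zero] using Nat.one_pos
  | succ n ih =>
    rw [Behrend.map_succ']
    have h1 := hv 0
    have h2 : Behrend.map M (v ∘ Fin.succ) < M ^ n := ih _ (fun i => hv i.succ)
    calc v 0 + Behrend.map M (v ∘ Fin.succ) * M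
        < M + Behrend.map M (v ∘ Fin.succ) * M := by omega
      _ = (Behrend.map M (v ∘ Fin.succ) + 1) * M := by ring
      _ ≤ M ^ n * M := Nat.mul_le_mul_right _ (by omega)
      _ = M ^ (n + 1) := (pow_succ M n).symm

lemma mySphereTrivial {k n d r : ℕ} (hk : 4 ≤ k)
    (v : Fin k → (Fin n → ℕ)) (hv : ∀ i, v i ∈ Behrend.sphere n d r)
    (heq : ∑ i ∈ Finset.univ.filter (fun i : Fin k => (i : ℕ) < k - 1), v i
      = (k - 1) • v ⟨k - 1, Nat.sub_lt (by omega) Nat.one_pos⟩) :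
    ∀ i, v i = v ⟨k - 1, Nat.sub_lt (by omega) Nat.one_pos⟩ := by
  set I := Finset.univ.filter (fun i : Fin k => (i : ℕ) < k - 1) with hI
  set z := v ⟨k - 1, Nat.sub_lt (by omega) Nat.one_pos⟩ with hz
  have hcard : I.card = k - 1 := myCardI k (by omega)
  have hs : ∀ i, ∑ j, (v i j) ^ 2 = r := by
    intro i
    have := hv i
    simp only [Behrend.sphere, mem_filter] at this
    exact this.2
  -- the sum condition at each coordinate
  have hcoord : ∀ j, ∑ i ∈ I, (v i j : ℤ) = (k - 1 : ℕ) * z j := by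
    intro j
    have := congrFun heq j
    simp only [Finset.sum_apply, Pi.smul_apply, smul_eq_mul] at this
    exact_mod_cast congrArg (Nat.cast : ℕ → ℤ) this
  -- key: sum of squared differences is zero
  have key : ∑ i ∈ I, ∑ j, ((v i j : ℤ) - z j) ^ 2 = 0 := by
    have expand : ∀ i ∈ I, ∑ j, ((v i j : ℤ) - z j) ^ 2
        = 2 * r - 2 * ∑ j, (v i j : ℤ) * z j := by
      intro i _
      have e1 : ∀ j, ((v i j : ℤ) - z j) ^ 2
          = (v i j : ℤ) ^ 2 + (z j : ℤ) ^ 2 - 2 * ((v i j : ℤ) * z j) := by intro j; ring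
      rw [Finset.sum_congr rfl (fun j _ => e1 j)]
      rw [Finset.sum_sub_distrib, Finset.sum_add_distrib, ← Finset.mul_sum]
      have c1 : ∑ j, ((v i j : ℤ)) ^ 2 = (r : ℤ) := by exact_mod_cast congrArg (Nat.cast : ℕ → ℤ) (hs i)
      have c2 : ∑ j, ((z j : ℤ)) ^ 2 = (r : ℤ) := by
        have := hs ⟨k - 1, Nat.sub_lt (by omega) Nat.one_pos⟩
        exact_mod_cast congrArg (Nat.cast : ℕ → ℤ) this
      rw [c1, c2]; ring
    rw [Finset.sum_congr rfl expand]
    have swap : ∑ i ∈ I, ∑ j, (v i j : ℤ) * z j = ((k - 1 : ℕ) : ℤ) * r := by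
      rw [Finset.sum_comm]
      have : ∀ j, ∑ i ∈ I, (v i j : ℤ) * z j = ((k - 1 : ℕ) : ℤ) * ((z j : ℤ) * z j) := by
        intro j
        rw [← Finset.sum_mul, hcoord j]; ring
      rw [Finset.sum_congr rfl (fun j _ => this j), ← Finset.mul_sum]
      have c2 : ∑ j, ((z j : ℤ)) * z j = (r : ℤ) := by
        have := hs ⟨k - 1, Nat.sub_lt (by omega) Nat.one_pos⟩
        have : ∑ j, ((z j : ℤ)) ^ 2 = (r : ℤ) := by exact_mod_cast congrArg (Nat.cast : ℕ → ℤ) this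
        simpa [sq] using this
      rw [c2]
    rw [Finset.sum_sub_distrib, Finset.sum_const, ← Finset.mul_sum, swap, hcard]
    ring
  -- conclude each coordinate is equal
  have hnn : ∀ i ∈ I, (0 : ℤ) ≤ ∑ j, ((v i j : ℤ) - z j) ^ 2 :=
    fun i _ => Finset.sum_nonneg fun j _ => sq_nonneg _
  have hz0 : ∀ i ∈ I, ∑ j, ((v i j : ℤ) - z j) ^ 2 = 0 :=
    (Finset.sum_eq_zero_iff_of_nonneg hnn).1 key
  have hIeq : ∀ i ∈ I, v i = z := by
    intro i hi
    have := (Finset.sum_eq_zero_iff_of_nonneg (fun j _ => sq_nonneg _)).1 (hz0 i hi)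
    funext j
    have h := this j (Finset.mem_univ j)
    have : (v i j : ℤ) = z j := by nlinarith [h]
    exact_mod_cast this
  intro i
  by_cases hi : (i : ℕ) < k - 1
  · exact hIeq i (by simp [hI, hi])
  · have : i = ⟨k - 1, Nat.sub_lt (by omega) Nat.one_pos⟩ := by
      apply Fin.ext; have := i.2; simp; omega
    rw [this]

lemma myTrivialSol {k n d r : ℕ} (hk : 4 ≤ k) (hd : 1 ≤ d)
    (f : Fin k → ℕ)
    (hf : ∀ i, f i ∈ (Behrend.sphere n d r).image
      (fun v => Behrend.map ((k - 1) * d) v + 1))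
    (heq : ∑ i ∈ Finset.univ.filter (fun i : Fin k => (i : ℕ) < k - 1), f i
      = (k - 1) * f ⟨k - 1, Nat.sub_lt (by omega) Nat.one_pos⟩) :
    ∀ i, f i = f ⟨k - 1, Nat.sub_lt (by omega) Nat.one_pos⟩ := by
  set M := (k - 1) * d with hM
  set I := Finset.univ.filter (fun i : Fin k => (i : ℕ) < k - 1) with hI
  have hcard : I.card = k - 1 := myCardI k (by omega)
  -- choose preimages
  have hchoice : ∀ i, ∃ v ∈ Behrend.sphere n d r, Behrend.map M v + 1 = f i := by
    intro i; have := hf i; simpa [Finset.mem_image] using this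
  choose v hv hvf using hchoice
  -- digit bounds on sphere elements
  have hdig : ∀ i, ∀ j, v i j < d := by
    intro i j
    exact Behrend.mem_box.1 (Behrend.sphere_subset_box (hv i)) j
  -- equation on maps
  have heqmap : ∑ i ∈ I, Behrend.map M (v i) = (k - 1) * Behrend.map M (v ⟨k - 1, Nat.sub_lt (by omega) Nat.one_pos⟩) := by
    have e1 : ∑ i ∈ I, (Behrend.map M (v i) + 1) = (k - 1) * (Behrend.map M (v ⟨k - 1, Nat.sub_lt (by omega) Nat.one_pos⟩) + 1) := by
      rw [Finset.sum_congr rfl (fun i _ => hvf i), heq, ← hvf ⟨k - 1, Nat.sub_lt (by omega) Nat.one_pos⟩]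
    rw [Finset.sum_add_distrib, Finset.sum_const, hcard, smul_eq_mul, mul_one, Nat.mul_add, mul_one] at e1
    omega
  -- lift to vector equation via injectivity
  have hvec : ∑ i ∈ I, v i = (k - 1) • v ⟨k - 1, Nat.sub_lt (by omega) Nat.one_pos⟩ := by
    have hm1 : (∑ i ∈ I, v i) ∈ {x : Fin n → ℕ | ∀ j, x j < M} := by
      intro j
      have e : (∑ i ∈ I, v i) j = ∑ i ∈ I, v i j := by simp [Finset.sum_apply]
      rw [e]
      have hle : ∑ i ∈ I, v i j ≤ I.card • (d - 1) :=
        Finset.sum_le_card_nsmul I _ _ (fun i _ => Nat.le_sub_one_of_lt (hdig i j))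
      rw [hcard, smul_eq_mul] at hle
      have hsplit : (k - 1) * d = (k - 1) * (d - 1) + (k - 1) := by
        have hd1 : d - 1 + 1 = d := by omega
        rw [← hd1, Nat.mul_add, Nat.mul_one, hd1]
      omega
    have hm2 : ((k - 1) • v ⟨k - 1, Nat.sub_lt (by omega) Nat.one_pos⟩) ∈ {x : Fin n → ℕ | ∀ j, x j < M} := by
      intro j
      have e : ((k - 1) • v ⟨k - 1, Nat.sub_lt (by omega) Nat.one_pos⟩) j = (k - 1) * v ⟨k - 1, Nat.sub_lt (by omega) Nat.one_pos⟩ j := by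
        simp
      rw [e]
      have : (k - 1) * v ⟨k - 1, Nat.sub_lt (by omega) Nat.one_pos⟩ j ≤ (k - 1) * (d - 1) :=
        Nat.mul_le_mul_left _ (Nat.le_sub_one_of_lt (hdig _ j))
      have hsplit : (k - 1) * d = (k - 1) * (d - 1) + (k - 1) := by
        have hd1 : d - 1 + 1 = d := by omega
        rw [← hd1, Nat.mul_add, Nat.mul_one, hd1]
      omega
    apply Behrend.map_injOn hm1 hm2
    rw [map_sum, AddMonoidHom.map_nsmul, smul_eq_mul, heqmap]
  have := mySphereTrivial hk v hv hvec
  intro i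
  rw [← hvf i, ← hvf ⟨k - 1, Nat.sub_lt (by omega) Nat.one_pos⟩, this i]

section BSet

variable {k N t C : ℕ} {A : Finset ℕ}

lemma myBsub (hk : 4 ≤ k) (hN : 1 ≤ N) (hC : C = (k - 1) * N) (hA : A ⊆ Finset.Icc 1 N) :
    (((Finset.range t) ×ˢ A).image fun p => C * p.1 + p.2) ⊆ Finset.Icc 1 (C * t) := by
  intro x hx
  simp only [Finset.mem_image, Finset.mem_product, Finset.mem_range] at hx
  obtain ⟨⟨j, a⟩, ⟨hj, ha⟩, rfl⟩ := hx
  have ha' := Finset.mem_Icc.1 (hA ha)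
  simp only [Finset.mem_Icc]
  constructor
  · omega
  · have h1 : C * j + a ≤ C * j + C := by
      have : a ≤ C := by
        have h2 : 2 * N ≤ (k - 1) * N := Nat.mul_le_mul_right N (by omega)
        omega
      omega
    have h2 : C * j + C = C * (j + 1) := by ring
    have h3 : C * (j + 1) ≤ C * t := Nat.mul_le_mul_left _ (by omega)
    omega

lemma myBcard (hk : 4 ≤ k) (hN : 1 ≤ N) (hC : C = (k - 1) * N) (hA : A ⊆ Finset.Icc 1 N) :
    (((Finset.range t) ×ˢ A).image fun p => C * p.1 + p.2).card = t * A.card := by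
  rw [Finset.card_image_of_injOn, Finset.card_product, Finset.card_range]
  rintro ⟨j, a⟩ hp ⟨j', a'⟩ hp' he
  simp only [Finset.coe_product, Set.mem_prod, Finset.mem_coe, Finset.mem_range] at hp hp'
  have ha := Finset.mem_Icc.1 (hA hp.2)
  have ha' := Finset.mem_Icc.1 (hA hp'.2)
  have hNC : N ≤ C := by
    have h2 : 2 * N ≤ (k - 1) * N := Nat.mul_le_mul_right N (by omega)
    omega
  have := myArith (C := C) (by omega) (by omega) (by omega) (by omega) he
  simp only [Prod.mk.injEq]
  exact ⟨this.1, this.2⟩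

lemma myBdecomp (hk : 4 ≤ k) (hN : 1 ≤ N) (hC : C = (k - 1) * N) (hA : A ⊆ Finset.Icc 1 N)
    {x : ℕ} (hx : x ∈ ((Finset.range t) ×ˢ A).image fun p => C * p.1 + p.2) :
    x % C ∈ A ∧ x / C < t ∧ x = C * (x / C) + x % C := by
  simp only [Finset.mem_image, Finset.mem_product, Finset.mem_range] at hx
  obtain ⟨⟨j, a⟩, ⟨hj, ha⟩, rfl⟩ := hx
  have ha' := Finset.mem_Icc.1 (hA ha)
  have hNC : N < C := by
    have h2 : 2 * N ≤ (k - 1) * N := Nat.mul_le_mul_right N (by omega)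
    omega
  have haC : a < C := by omega
  have hCpos : 0 < C := by omega
  have hmod : (C * j + a) % C = a := by rw [Nat.mul_add_mod, Nat.mod_eq_of_lt haC]
  have hdiv : (C * j + a) / C = j := by
    rw [Nat.mul_add_div hCpos, Nat.div_eq_of_lt haC, Nat.add_zero]
  rw [hmod, hdiv]
  exact ⟨ha, hj, rfl⟩


end BSet

lemma myCountBound {k N t C : ℕ} {A : Finset ℕ} (hk : 4 ≤ k) (hN : 1 ≤ N)
    (hC : C = (k - 1) * N) (hA : A ⊆ Finset.Icc 1 N)
    (htriv : ∀ f : Fin k → ℕ, (∀ i, f i ∈ A) →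
      (∑ i ∈ Finset.univ.filter (fun i : Fin k => (i : ℕ) < k - 1), f i)
        = (k - 1) * f ⟨k - 1, Nat.sub_lt (by omega) Nat.one_pos⟩ → ∀ i, f i = f ⟨k - 1, Nat.sub_lt (by omega) Nat.one_pos⟩) :
    ((Fintype.piFinset fun _ : Fin k =>
        ((Finset.range t) ×ˢ A).image fun p => C * p.1 + p.2).filter
      fun x => (∑ i ∈ Finset.univ.filter (fun i : Fin k => (i : ℕ) < k - 1), x i)
        = (k - 1) * x ⟨k - 1, Nat.sub_lt (by omega) Nat.one_pos⟩).card ≤ A.card * t ^ (k - 1) := by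
  set B : Finset ℕ := ((Finset.range t) ×ˢ A).image fun p => C * p.1 + p.2 with hB
  set I : Finset (Fin k) := Finset.univ.filter (fun i : Fin k => (i : ℕ) < k - 1) with hIdef
  have hcard : I.card = k - 1 := myCardI k (by omega)
  set last : Fin k := ⟨k - 1, Nat.sub_lt (by omega) Nat.one_pos⟩ with hlastdef
  set emb : Fin (k - 2) → Fin k := fun j => ⟨j.1, by omega⟩ with hembdef
  -- decomposition facts for solutions
  have main : ∀ x : Fin k → ℕ, (∀ i, x i ∈ B) →
      ((∑ i ∈ I, x i) = (k - 1) * x last) →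
      (∀ i, x i % C ∈ A) ∧ (∀ i, x i / C < t) ∧ (∀ i, x i = C * (x i / C) + x i % C) ∧
      (∀ i, x i % C = x last % C) ∧ ((∑ i ∈ I, x i / C) = (k - 1) * (x last / C)) := by
    intro x hmem heq
    have hd : ∀ i, x i % C ∈ A ∧ x i / C < t ∧ x i = C * (x i / C) + x i % C :=
      fun i => myBdecomp hk hN hC hA (hmem i)
    have hxa : ∀ i, x i % C ∈ A := fun i => (hd i).1
    have hxb : ∀ i, x i / C < t := fun i => (hd i).2.1
    have hxd : ∀ i, x i = C * (x i / C) + x i % C := fun i => (hd i).2.2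
    have haN : ∀ i, 1 ≤ x i % C ∧ x i % C ≤ N := fun i => Finset.mem_Icc.1 (hA (hxa i))
    -- rewrite both sides
    have lhs : (∑ i ∈ I, x i) = C * (∑ i ∈ I, x i / C) + ∑ i ∈ I, x i % C := by
      rw [Finset.sum_congr rfl (fun i _ => hxd i), Finset.sum_add_distrib, Finset.mul_sum]
    have rhs : (k - 1) * x last = C * ((k - 1) * (x last / C)) + (k - 1) * (x last % C) := by
      conv_lhs => rw [hxd last]
      ring
    have hb1 : Finset.card I • 1 ≤ ∑ i ∈ I, x i % C :=
      Finset.card_nsmul_le_sum I _ _ (fun i _ => (haN i).1)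
    have hb2 : ∑ i ∈ I, x i % C ≤ Finset.card I • N :=
      Finset.sum_le_card_nsmul I _ _ (fun i _ => (haN i).2)
    rw [hcard, smul_eq_mul, mul_one] at hb1
    rw [hcard, smul_eq_mul] at hb2
    have hb3 : 1 ≤ (k - 1) * (x last % C) := Nat.mul_pos (by omega) (haN last).1
    have hb4 : (k - 1) * (x last % C) ≤ (k - 1) * N := Nat.mul_le_mul_left _ (haN last).2
    have he' : C * (∑ i ∈ I, x i / C) + (∑ i ∈ I, x i % C)
        = C * ((k - 1) * (x last / C)) + (k - 1) * (x last % C) := by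
      rw [← lhs, ← rhs]; exact heq
    have hs1 : 1 ≤ ∑ i ∈ I, x i % C := by omega
    have hs2 : (∑ i ∈ I, x i % C) ≤ C := le_trans hb2 (le_of_eq hC.symm)
    have hs4 : (k - 1) * (x last % C) ≤ C := le_trans hb4 (le_of_eq hC.symm)
    have harith := myArith hs1 hs2 hb3 hs4 he' 
    have ha_eq : (∑ i ∈ I, x i % C) = (k - 1) * (x last % C) := harith.2
    have hb_eq : (∑ i ∈ I, x i / C) = (k - 1) * (x last / C) := harith.1
    have ha_all := htriv (fun i => x i % C) hxa ha_eq
    exact ⟨hxa, hxb, hxd, ha_all, hb_eq⟩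
  -- the injection
  refine le_trans (Finset.card_le_card_of_injOn
    (fun x => (x last, fun j : Fin (k - 2) => x (emb j) / C))
    (t := B ×ˢ Fintype.piFinset (fun _ : Fin (k - 2) => Finset.range t)) ?_ ?_) ?_
  · intro x hx
    rw [Finset.mem_coe, Finset.mem_filter] at hx
    have hmem : ∀ i, x i ∈ B := fun i => (Fintype.mem_piFinset.1 hx.1) i
    obtain ⟨_, hxb, _, _, _⟩ := main x hmem hx.2
    rw [Finset.mem_coe, Finset.mem_product]
    exact ⟨hmem last, Fintype.mem_piFinset.2 fun j => Finset.mem_range.2 (hxb (emb j))⟩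
  · intro x hx y hy hxy
    simp only [Finset.mem_coe, Finset.mem_filter] at hx hy
    have hmx : ∀ i, x i ∈ B := fun i => (Fintype.mem_piFinset.1 hx.1) i
    have hmy : ∀ i, y i ∈ B := fun i => (Fintype.mem_piFinset.1 hy.1) i
    obtain ⟨hxa, hxb, hxd, hxall, hxbeq⟩ := main x hmx hx.2
    obtain ⟨hya, hyb, hyd, hyall, hybeq⟩ := main y hmy hy.2
    have h1 : x last = y last := congrArg Prod.fst hxy
    have h2 : ∀ j : Fin (k - 2), x (emb j) / C = y (emb j) / C := by
      intro j
      exact congrFun (congrArg Prod.snd hxy) j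
    have hsmall : ∀ i : Fin k, (i : ℕ) < k - 2 → x i / C = y i / C := by
      intro i hi
      have : i = emb ⟨(i : ℕ), hi⟩ := by apply Fin.ext; simp [hembdef]
      rw [this]; exact h2 _
    -- the k-2 coordinate
    have i0mem : (⟨k - 2, by omega⟩ : Fin k) ∈ I := by
      simp [hIdef]; omega
    have herase : ∑ i ∈ I.erase ⟨k - 2, by omega⟩, x i / C
        = ∑ i ∈ I.erase ⟨k - 2, by omega⟩, y i / C := by
      refine Finset.sum_congr rfl fun i hi => ?_
      rw [Finset.mem_erase] at hi
      have hiI : (i : ℕ) < k - 1 := by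
        have := hi.2; have h := Finset.mem_filter.1 hi.2; exact h.2
      have hine : (i : ℕ) ≠ k - 2 := by
        intro hcon
        exact hi.1 (Fin.ext hcon)
      exact hsmall i (by omega)
    have hsum_x : x ⟨k - 2, by omega⟩ / C + ∑ i ∈ I.erase ⟨k - 2, by omega⟩, x i / C
        = ∑ i ∈ I, x i / C := Finset.add_sum_erase I (fun i => x i / C) i0mem
    have hsum_y : y ⟨k - 2, by omega⟩ / C + ∑ i ∈ I.erase ⟨k - 2, by omega⟩, y i / C
        = ∑ i ∈ I, y i / C := Finset.add_sum_erase I (fun i => y i / C) i0mem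
    have hblast : x last / C = y last / C := by rw [h1]
    have hbmid : x ⟨k - 2, by omega⟩ / C = y ⟨k - 2, by omega⟩ / C := by
      have e1 : (∑ i ∈ I, x i / C) = (∑ i ∈ I, y i / C) := by
        rw [hxbeq, hybeq, hblast]
      omega
    have hball : ∀ i, x i / C = y i / C := by
      intro i
      have hik : (i : ℕ) < k := i.2
      rcases Nat.lt_trichotomy (i : ℕ) (k - 2) with h | h | h
      · exact hsmall i h
      · have : i = (⟨k - 2, by omega⟩ : Fin k) := Fin.ext h
        rw [this]; exact hbmid
      · have : i = last := by apply Fin.ext; simp [hlastdef]; omega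
        rw [this]; exact hblast
    funext i
    rw [hxd i, hyd i, hball i, hxall i, hyall i, h1]
  · rw [Finset.card_product, Fintype.card_piFinset]
    simp only [Finset.card_range, Finset.prod_const, Finset.card_univ, Fintype.card_fin]
    rw [myBcard hk hN hC hA]
    have hk1 : k - 1 = (k - 2) + 1 := by omega
    rw [hk1, pow_succ]
    exact le_of_eq (by ring)

lemma myNumeric1 {a L : ℝ} (ha : 1 ≤ a) (hL : 16 * a + 128 ≤ L) {n d : ℕ}
    (hn1 : L / (4 * a) ≤ n) (hn2 : (n : ℝ) < L / (4 * a) + 1)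
    (hd1 : exp (L / 4) ≤ d) (hd2 : (d : ℝ) < exp (L / 4) + 1) :
    (2 * exp (-L)) * ((exp a) ^ (n + 1) * n * (d : ℝ) ^ 2) ≤ 1 := by
  have hL0 : (128 : ℝ) ≤ L := by linarith
  have ha0 : (0 : ℝ) < a := by linarith
  have hnL : (n : ℝ) ≤ L := by
    have : L / (4 * a) ≤ L / 4 := by
      apply div_le_div_of_nonneg_left (by linarith) (by norm_num) (by linarith)
    nlinarith
  have h1 : (exp a) ^ (n + 1) = exp (((n : ℝ) + 1) * a) := by
    rw [← Real.exp_nat_mul]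
    norm_num
  have h2 : ((n : ℝ) + 1) * a ≤ L / 4 + 2 * a := by
    have hna : ((n : ℝ) + 1) ≤ L / (4 * a) + 2 := by linarith
    have := mul_le_mul_of_nonneg_right hna (le_of_lt ha0)
    have hdiv : L / (4 * a) * a = L / 4 := by field_simp
    nlinarith
  have h3 : (d : ℝ) ^ 2 ≤ 4 * exp (L / 2) := by
    have he1 : (1 : ℝ) ≤ exp (L / 4) := by
      rw [← Real.exp_zero]; apply Real.exp_le_exp.2; linarith
    have hd3 : (d : ℝ) ≤ 2 * exp (L / 4) := by linarith
    have hsq : exp (L / 4) * exp (L / 4) = exp (L / 2) := by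
      rw [← Real.exp_add]; congr 1; ring
    nlinarith [Nat.cast_nonneg (α := ℝ) d]
  -- 8 L ≤ exp (L/4 - 2a)
  have key : 8 * L ≤ exp (L / 4 - 2 * a) := by
    have e1 : (L / 16 + 1) ^ 2 ≤ exp (L / 8) := by
      have := Real.add_one_le_exp (L / 16)
      have hsq : exp (L / 16) * exp (L / 16) = exp (L / 8) := by
        rw [← Real.exp_add]; congr 1; ring
      nlinarith [Real.exp_pos (L / 16)]
    have e2 : (17 : ℝ) ≤ exp (L / 8 - 2 * a) := by
      have : (16 : ℝ) ≤ L / 8 - 2 * a := by linarith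
      have h17 := Real.add_one_le_exp (16 : ℝ)
      have := Real.exp_le_exp.2 this
      linarith
    have esplit : exp (L / 4 - 2 * a) = exp (L / 8) * exp (L / 8 - 2 * a) := by
      rw [← Real.exp_add]; ring_nf
    rw [esplit]
    nlinarith [Real.exp_pos (L / 8), Real.exp_pos (L / 8 - 2 * a)]
  -- combine
  have hcomb : (2 * exp (-L)) * ((exp a) ^ (n + 1) * n * (d : ℝ) ^ 2)
      ≤ 2 * exp (-L) * (exp (L / 4 + 2 * a) * L * (4 * exp (L / 2))) := by
    have hp1 : (0:ℝ) < exp (-L) := Real.exp_pos _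
    have hb1 : (exp a) ^ (n + 1) ≤ exp (L / 4 + 2 * a) := by
      rw [h1]; exact Real.exp_le_exp.2 h2
    have hn0 : (0:ℝ) ≤ (n:ℝ) := Nat.cast_nonneg _
    have hd0 : (0:ℝ) ≤ (d:ℝ)^2 := sq_nonneg _
    have : (exp a) ^ (n + 1) * n * (d : ℝ) ^ 2 ≤ exp (L / 4 + 2 * a) * L * (4 * exp (L / 2)) := by
      apply mul_le_mul
      · apply mul_le_mul hb1 hnL hn0 (Real.exp_pos _).le
      · exact h3
      · exact hd0
      · positivity
    nlinarith
  refine hcomb.trans ?_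
  have ecol : 2 * exp (-L) * (exp (L / 4 + 2 * a) * L * (4 * exp (L / 2)))
      = 8 * L * exp (-(L / 4 - 2 * a)) := by
    have h : exp (-L) * (exp (L / 4 + 2 * a) * exp (L / 2)) = exp (-(L / 4 - 2 * a)) := by
      rw [← Real.exp_add, ← Real.exp_add]; congr 1; ring
    calc 2 * exp (-L) * (exp (L / 4 + 2 * a) * L * (4 * exp (L / 2)))
        = 8 * L * (exp (-L) * (exp (L / 4 + 2 * a) * exp (L / 2))) := by ring
      _ = 8 * L * exp (-(L / 4 - 2 * a)) := by rw [h]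
  rw [ecol]
  have := mul_le_mul_of_nonneg_right key (Real.exp_pos (-(L / 4 - 2 * a))).le
  rw [← Real.exp_add] at this
  simp only [add_neg_cancel, Real.exp_zero] at this
  linarith

lemma myNumeric2 {a L : ℝ} (ha : 1 ≤ a) (hL0 : 0 ≤ L) {n m : ℕ}
    (hn1 : L / (4 * a) ≤ n) (hm : a ≤ (m : ℝ)) :
    exp (1 / 16 * L ^ 2) ≤ exp (L / 4) ^ (n * m) := by
  rw [← Real.exp_nat_mul]
  apply Real.exp_le_exp.2
  have ha0 : (0 : ℝ) < a := by linarith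
  have h1 : L / 4 ≤ (n : ℝ) * m := by
    have h2 : L / (4 * a) * a ≤ (n : ℝ) * m := by
      apply mul_le_mul hn1 hm (le_of_lt ha0) (Nat.cast_nonneg _)
    have hdiv : L / (4 * a) * a = L / 4 := by field_simp
    linarith [hdiv ▸ h2]
  have : ((n * m : ℕ) : ℝ) = (n : ℝ) * m := by push_cast; ring
  rw [this]
  nlinarith

lemma myAcard {k n d : ℕ} (hk : 4 ≤ k) (hd : 1 ≤ d) (r : ℕ) :
    ((Behrend.sphere n d r).image fun v => Behrend.map ((k - 1) * d) v + 1).card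
      = (Behrend.sphere n d r).card := by
  apply Finset.card_image_of_injOn
  intro v hv w hw he
  have hdM : d ≤ (k - 1) * d := by
    calc d = 1 * d := (one_mul d).symm
    _ ≤ (k - 1) * d := Nat.mul_le_mul_right d (by omega)
  have h1 : ∀ i, v i < (k - 1) * d := fun i =>
    lt_of_lt_of_le (Behrend.mem_box.1 (Behrend.sphere_subset_box hv) i) hdM
  have h2 : ∀ i, w i < (k - 1) * d := fun i =>
    lt_of_lt_of_le (Behrend.mem_box.1 (Behrend.sphere_subset_box hw) i) hdM
  have he' : Behrend.map ((k - 1) * d) v + 1 = Behrend.map ((k - 1) * d) w + 1 := he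
  exact Behrend.map_injOn h1 h2 (by omega)

lemma myAsub {k n d : ℕ} (hk : 4 ≤ k) (hd : 1 ≤ d) (r : ℕ) :
    ((Behrend.sphere n d r).image fun v => Behrend.map ((k - 1) * d) v + 1)
      ⊆ Finset.Icc 1 (((k - 1) * d) ^ n) := by
  intro x hx
  simp only [Finset.mem_image] at hx
  obtain ⟨v, hv, rfl⟩ := hx
  have hdM : d ≤ (k - 1) * d := by
    calc d = 1 * d := (one_mul d).symm
    _ ≤ (k - 1) * d := Nat.mul_le_mul_right d (by omega)
  have h1 : ∀ i, v i < (k - 1) * d := fun i =>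
    lt_of_lt_of_le (Behrend.mem_box.1 (Behrend.sphere_subset_box hv) i) hdM
  have := myMapLt v h1
  simp only [Finset.mem_Icc]
  omega
/-- Behrend-type construction: there is an absolute constant `c > 0`
such that for every `k ≥ 4` and all sufficiently small `α > 0`, there are infinitely
many `N ≥ 1` with a set `A ⊆ {1, …, N}`, `|A| ≥ αN`, containing at most
`exp(-c log²(2/α)) N^{k-1}` solutions of `x₁ + ⋯ + x_{k-1} = (k-1)x_k`. -/
theorem behrend_type_construction :
    ∃ c : ℝ, 0 < c ∧
      ∀ (k : ℕ) (hk : 4 ≤ k),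
        ∃ α₀ : ℝ, 0 < α₀ ∧
          ∀ α : ℝ, 0 < α → α ≤ α₀ →
            {N : ℕ | 1 ≤ N ∧
              ∃ A ⊆ Finset.Icc 1 N, α * N ≤ (A.card : ℝ) ∧
                ((((Fintype.piFinset fun _ : Fin k => A).filter fun x =>
                    (∑ i ∈ Finset.univ.filter fun i : Fin k => (i : ℕ) < k - 1, x i)
                      = (k - 1) * x ⟨k - 1, by omega⟩).card : ℝ)
                  ≤ Real.exp (-(c * (Real.log (2 / α)) ^ 2)) * (N : ℝ) ^ (k - 1))}.Infinite := by
  refine ⟨1/16, by norm_num, ?_⟩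
  intro k hk
  have hk3 : (3 : ℝ) ≤ ((k - 1 : ℕ) : ℝ) := by exact_mod_cast (by omega : 3 ≤ k - 1)
  have hk1 : (0 : ℝ) < ((k - 1 : ℕ) : ℝ) := by linarith
  set a : ℝ := Real.log ((k - 1 : ℕ) : ℝ) with hadef
  have ha1 : 1 ≤ a := by
    rw [hadef, Real.le_log_iff_exp_le (by linarith)]
    exact (Real.exp_one_lt_d9.le.trans (by norm_num)).trans hk3
  refine ⟨2 * Real.exp (-(16 * a + 128)), by positivity, ?_⟩
  intro α hα hα₀
  set L : ℝ := Real.log (2 / α) with hLdef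
  have hLa : 16 * a + 128 ≤ L := by
    have h1 : Real.exp (16 * a + 128) = 2 / (2 * Real.exp (-(16 * a + 128))) := by
      rw [Real.exp_neg]; field_simp
    have h2 : 2 / (2 * Real.exp (-(16 * a + 128))) ≤ 2 / α :=
      div_le_div_of_nonneg_left (by norm_num) hα hα₀
    calc 16 * a + 128 = Real.log (Real.exp (16 * a + 128)) := (Real.log_exp _).symm
      _ ≤ Real.log (2 / α) := Real.log_le_log (Real.exp_pos _) (h1 ▸ h2)
  have hL0 : (0 : ℝ) < L := by linarith
  have hexpL : Real.exp L = 2 / α := Real.exp_log (by positivity)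
  have hαL : α = 2 * Real.exp (-L) := by
    rw [Real.exp_neg, hexpL]
    field_simp
  set n := ⌈L / (4 * a)⌉₊ with hndef
  set d := ⌈Real.exp (L / 4)⌉₊ with hddef
  have hn1 : L / (4 * a) ≤ (n : ℝ) := Nat.le_ceil _
  have hn2 : (n : ℝ) < L / (4 * a) + 1 := Nat.ceil_lt_add_one (by positivity)
  have hd1 : Real.exp (L / 4) ≤ (d : ℝ) := Nat.le_ceil _
  have hd2 : (d : ℝ) < Real.exp (L / 4) + 1 := Nat.ceil_lt_add_one (by positivity)
  have hdpos : 1 ≤ d := by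
    have h := Nat.ceil_pos.mpr (Real.exp_pos (L / 4))
    omega
  have hnpos : 1 ≤ n := by
    have h := Nat.ceil_pos.mpr (show (0:ℝ) < L / (4 * a) by positivity)
    omega
  obtain ⟨r, hr⟩ := Behrend.exists_large_sphere n d
  set M := (k - 1) * d with hMdef
  set N := M ^ n with hNdef
  set A := (Behrend.sphere n d r).image (fun v => Behrend.map M v + 1) with hAdef
  have hAcard : ((d ^ n : ℕ) : ℝ) / ((n * d ^ 2 : ℕ) : ℝ) ≤ (A.card : ℝ) := by
    rw [hAdef, myAcard hk hdpos r]
    exact hr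
  have hAsub : A ⊆ Finset.Icc 1 N := myAsub hk hdpos r
  have hM1 : 1 ≤ M := by
    have := Nat.mul_le_mul (show 1 ≤ k - 1 by omega) hdpos
    omega
  have hN1 : 1 ≤ N := Nat.one_le_pow n M (by omega)
  have htriv : ∀ f : Fin k → ℕ, (∀ i, f i ∈ A) →
      (∑ i ∈ Finset.univ.filter (fun i : Fin k => (i : ℕ) < k - 1), f i)
        = (k - 1) * f ⟨k - 1, by omega⟩ → ∀ i, f i = f ⟨k - 1, by omega⟩ :=
    fun f hf heq => myTrivialSol hk hdpos f hf heq
  have hKexp : ((k - 1 : ℕ) : ℝ) = Real.exp a := (Real.exp_log hk1).symm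
  have key1 : α * (((k - 1 : ℕ) : ℝ) ^ (n + 1) * n * (d : ℝ) ^ 2) ≤ 1 := by
    rw [hαL, hKexp]
    exact myNumeric1 ha1 hLa hn1 hn2 hd1 hd2
  have hkm : a ≤ ((k - 2 : ℕ) : ℝ) := by
    have hlog := Real.log_le_sub_one_of_pos hk1
    have hcast : ((k - 1 : ℕ) : ℝ) - 1 = ((k - 2 : ℕ) : ℝ) := by
      have h1 : k - 1 = (k - 2) + 1 := by omega
      rw [h1]
      push_cast
      ring
    rw [hadef]
    linarith [hcast ▸ hlog]
  have key2 : Real.exp (1 / 16 * L ^ 2) ≤ Real.exp (L / 4) ^ (n * (k - 2)) :=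
    myNumeric2 ha1 hL0.le hn1 hkm
  have hK1 : (1 : ℝ) ≤ ((k - 1 : ℕ) : ℝ) := by linarith
  have hNcast : (N : ℝ) = (((k - 1 : ℕ) : ℝ) * (d : ℝ)) ^ n := by
    rw [hNdef, hMdef]
    push_cast
    ring
  -- base density
  have hdense : α * (((k - 1 : ℕ) : ℝ) * (N : ℝ)) ≤ (A.card : ℝ) := by
    refine le_trans ?_ hAcard
    have hnd2 : (0 : ℝ) < ((n * d ^ 2 : ℕ) : ℝ) := by
      have : 1 ≤ n * d ^ 2 := Nat.one_le_iff_ne_zero.2 (by positivity)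
      exact_mod_cast lt_of_lt_of_le zero_lt_one (by exact_mod_cast this)
    rw [le_div_iff₀ hnd2, hNcast]
    have hcast2 : ((d ^ n : ℕ) : ℝ) = (d : ℝ) ^ n := by push_cast; ring
    have hcast3 : ((n * d ^ 2 : ℕ) : ℝ) = (n : ℝ) * (d : ℝ) ^ 2 := by push_cast; ring
    rw [hcast2, hcast3]
    calc α * (((k - 1 : ℕ) : ℝ) * (((k - 1 : ℕ) : ℝ) * (d : ℝ)) ^ n) * ((n : ℝ) * (d : ℝ) ^ 2)
        = (α * (((k - 1 : ℕ) : ℝ) ^ (n + 1) * n * (d : ℝ) ^ 2)) * (d : ℝ) ^ n := by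
          rw [mul_pow]; ring
      _ ≤ 1 * (d : ℝ) ^ n := mul_le_mul_of_nonneg_right key1 (by positivity)
      _ = (d : ℝ) ^ n := one_mul _
  -- count key
  have keyN : Real.exp (1 / 16 * L ^ 2) ≤ (N : ℝ) ^ (k - 2) := by
    refine key2.trans ?_
    have e1 : (N : ℝ) ^ (k - 2) = (((k - 1 : ℕ) : ℝ) * (d : ℝ)) ^ (n * (k - 2)) := by
      rw [hNcast, ← pow_mul]
    rw [e1]
    apply pow_le_pow_left₀ (Real.exp_pos _).le
    calc Real.exp (L / 4) ≤ (d : ℝ) := hd1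
      _ = 1 * (d : ℝ) := (one_mul _).symm
      _ ≤ ((k - 1 : ℕ) : ℝ) * (d : ℝ) :=
          mul_le_mul_of_nonneg_right hK1 (Nat.cast_nonneg _)
  set C := (k - 1) * N with hCdef
  have hCpos : 0 < C := Nat.mul_pos (by omega) (by omega)
  apply Set.infinite_of_injective_forall_mem (f := fun t : ℕ => C * (t + 1))
  · intro t t' h
    simp only at h
    have := Nat.eq_of_mul_eq_mul_left hCpos h
    omega
  · intro t
    set B := ((Finset.range (t + 1)) ×ˢ A).image (fun p => C * p.1 + p.2) with hBdef
    have hBsub : B ⊆ Finset.Icc 1 (C * (t + 1)) := myBsub hk hN1 hCdef hAsub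
    have hBcard : B.card = (t + 1) * A.card := myBcard hk hN1 hCdef hAsub
    have hcount := myCountBound (t := t + 1) hk hN1 hCdef hAsub htriv
    have hAN : A.card ≤ N := by
      have := Finset.card_le_card hAsub
      rwa [Nat.card_Icc, Nat.add_sub_cancel] at this
    have hCcast : ((C * (t + 1) : ℕ) : ℝ) = ((k - 1 : ℕ) : ℝ) * (N : ℝ) * ((t + 1 : ℕ) : ℝ) := by
      rw [hCdef]; push_cast; ring
    constructor
    · exact Nat.one_le_iff_ne_zero.2 (by positivity)
    refine ⟨B, hBsub, ?_, ?_⟩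
    · -- density
      rw [hBcard]
      push_cast
      have hCR : (C : ℝ) = ((k - 1 : ℕ) : ℝ) * (N : ℝ) := by rw [hCdef]; push_cast; ring
      rw [hCR]
      have hTnn : (0 : ℝ) ≤ (t : ℝ) + 1 := add_nonneg (Nat.cast_nonneg t) zero_le_one
      have h := mul_le_mul_of_nonneg_left hdense hTnn
      linarith [h]
    · -- count
      refine le_trans (Nat.cast_le.mpr hcount) ?_
      have hCR : (C : ℝ) = ((k - 1 : ℕ) : ℝ) * (N : ℝ) := by rw [hCdef]; push_cast; ring
      have hT1' : (1 : ℝ) ≤ (t : ℝ) + 1 := le_add_of_nonneg_left (Nat.cast_nonneg t)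
      have hNR : (1 : ℝ) ≤ (N : ℝ) := by exact_mod_cast hN1
      have e2 : (N : ℝ) ^ (k - 1) = (N : ℝ) ^ (k - 2) * (N : ℝ) := by
        rw [myKsucc hk, pow_succ]
      push_cast
      have e1 : ((N : ℝ) * ((t : ℝ) + 1)) ^ (k - 1) ≤ ((C : ℝ) * ((t : ℝ) + 1)) ^ (k - 1) := by
        apply pow_le_pow_left₀ (by positivity)
        rw [hCR]
        have hTnn : (0 : ℝ) ≤ (N : ℝ) * ((t : ℝ) + 1) := by positivity
        have h := mul_le_mul_of_nonneg_right hK1 hTnn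
        linarith [h]
      calc ((A.card : ℝ)) * ((t : ℝ) + 1) ^ (k - 1)
          ≤ (N : ℝ) * ((t : ℝ) + 1) ^ (k - 1) :=
            mul_le_mul_of_nonneg_right (by exact_mod_cast hAN) (by positivity)
        _ = Real.exp (-(1/16 * L ^ 2)) *
              (Real.exp (1/16 * L ^ 2) * ((N : ℝ) * ((t : ℝ) + 1) ^ (k - 1))) := by
            rw [← mul_assoc, ← Real.exp_add]
            simp
        _ ≤ Real.exp (-(1/16 * L ^ 2)) *
              ((N : ℝ) ^ (k - 2) * ((N : ℝ) * ((t : ℝ) + 1) ^ (k - 1))) :=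
            mul_le_mul_of_nonneg_left
              (mul_le_mul_of_nonneg_right keyN (by positivity)) (Real.exp_pos _).le
        _ = Real.exp (-(1/16 * L ^ 2)) * (((N : ℝ) * ((t : ℝ) + 1)) ^ (k - 1)) := by
            rw [mul_pow, e2]
            ring
        _ ≤ Real.exp (-(1/16 * L ^ 2)) * (((C : ℝ) * ((t : ℝ) + 1)) ^ (k - 1)) :=
            mul_le_mul_of_nonneg_left e1 (Real.exp_pos _).le
end

section
/- Let M ≥ 2, d ≥ 1, k ≥ 3, and let D : ℕ → ℤ^d send n to the vector of its last d base-M digits, D(n)_i = ⌊n/M^{i−1}⌋ mod M for 1 ≤ i ≤ d. Let A ⊆ {1,…,N} be a set of integers all of whose images under D lie on a common sphere {v ∈ ℤ^d : ||v||₂² = r} and have all coordinates strictly less than M/k. Then every solution (x_1, …, x_k) ∈ A^k of x_1 + ⋯ + x_{k−1} = (k−1)x_k satisfies D(x_1) = D(x_2) = ⋯ = D(x_k). -/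
open scoped Classical BigOperators

/-- The vector of the last `d` base-`M` digits of `n`: `D(n)_i = ⌊n / M^i⌋ mod M`
(indices `0 ≤ i < d`, corresponding to `M^{i-1}` with `1`-based indexing). -/
def digitVec (M d : ℕ) (n : ℕ) : Fin d → ℕ := fun i => n / M ^ (i : ℕ) % M

/-- mod by `M^(j+1)` splits off the `j`-th digit. -/
lemma mod_pow_succ_eq (M j n : ℕ) :
    n % M ^ (j + 1) = M ^ j * (n / M ^ j % M) + n % M ^ j := by
  have h1 : n % (M ^ j * M) / M ^ j = n / M ^ j % M :=
    Nat.mod_mul_right_div_self n (M ^ j) M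
  have h2 : n % (M ^ j * M) % M ^ j = n % M ^ j :=
    Nat.mod_mod_of_dvd n ⟨M, rfl⟩
  have := Nat.div_add_mod (n % (M ^ j * M)) (M ^ j)
  rw [h1, h2] at this
  rw [pow_succ, ← this]

/-- no-carry bound: if digit sums are `< M` at all positions `< j`, then the
sum of residues mod `M^j` is `< M^j`. -/
lemma carry_bound {ι : Type*} (s : Finset ι) (a : ι → ℕ) (M : ℕ) (hM : 2 ≤ M) :
    ∀ j : ℕ, (∀ t < j, ∑ i ∈ s, a i / M ^ t % M < M) →
      ∑ i ∈ s, a i % M ^ j < M ^ j := by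
  intro j
  induction j with
  | zero => simp [Nat.mod_one]
  | succ j ih =>
    intro h
    have hsum : ∑ i ∈ s, a i % M ^ (j + 1)
        = M ^ j * (∑ i ∈ s, a i / M ^ j % M) + ∑ i ∈ s, a i % M ^ j := by
      rw [Finset.mul_sum, ← Finset.sum_add_distrib]
      exact Finset.sum_congr rfl fun i _ => mod_pow_succ_eq M j (a i)
    have h1 : ∑ i ∈ s, a i / M ^ j % M ≤ M - 1 :=
      Nat.le_sub_one_of_lt (h j (Nat.lt_succ_self j))
    have h2 : ∑ i ∈ s, a i % M ^ j < M ^ j := ih fun t ht => h t (ht.trans (Nat.lt_succ_self j))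
    have hMpos : 0 < M ^ j := Nat.pow_pos (by omega)
    calc ∑ i ∈ s, a i % M ^ (j + 1)
        = M ^ j * (∑ i ∈ s, a i / M ^ j % M) + ∑ i ∈ s, a i % M ^ j := hsum
      _ ≤ M ^ j * (M - 1) + (M ^ j - 1) := by
          exact Nat.add_le_add (Nat.mul_le_mul_left _ h1) (Nat.le_sub_one_of_lt h2)
      _ < M ^ (j + 1) := by
          have : M ^ (j + 1) = M ^ j * M := pow_succ M j
          have hMM : M ^ j * (M - 1) + M ^ j = M ^ j * M := by
            rw [← Nat.mul_succ]; congr 1; omega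
          omega

/-- sum of residues equals residue of sum under no-carry. -/
lemma mod_sum_eq {ι : Type*} (s : Finset ι) (a : ι → ℕ) (M : ℕ) (hM : 2 ≤ M)
    (j : ℕ) (h : ∀ t < j, ∑ i ∈ s, a i / M ^ t % M < M) :
    (∑ i ∈ s, a i) % M ^ j = ∑ i ∈ s, a i % M ^ j := by
  rw [Finset.sum_nat_mod]
  exact Nat.mod_eq_of_lt (carry_bound s a M hM j h)

/-- digit of a sum is the sum of digits under no-carry. -/
lemma digit_sum_eq {ι : Type*} (s : Finset ι) (a : ι → ℕ) (M : ℕ) (hM : 2 ≤ M)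
    (j : ℕ) (h : ∀ t < j + 1, ∑ i ∈ s, a i / M ^ t % M < M) :
    (∑ i ∈ s, a i) / M ^ j % M = ∑ i ∈ s, a i / M ^ j % M := by
  have hMpos : 0 < M ^ j := Nat.pow_pos (by omega)
  have h1 := mod_sum_eq s a M hM (j + 1) h
  have h2 := mod_sum_eq s a M hM j (fun t ht => h t (ht.trans (Nat.lt_succ_self j)))
  have e1 := mod_pow_succ_eq M j (∑ i ∈ s, a i)
  have e2 : ∑ i ∈ s, a i % M ^ (j + 1)
      = M ^ j * (∑ i ∈ s, a i / M ^ j % M) + ∑ i ∈ s, a i % M ^ j := by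
    rw [Finset.mul_sum, ← Finset.sum_add_distrib]
    exact Finset.sum_congr rfl fun i _ => mod_pow_succ_eq M j (a i)
  rw [h1, e2, h2] at e1
  have := Nat.add_right_cancel e1
  exact (Nat.eq_of_mul_eq_mul_left hMpos this).symm

/-- if all elements of `A ⊆ {1,…,N}` have digit vectors on a common
sphere `‖D(x)‖₂² = r` with all digits `< M/k`, then every solution in `A` of
`x₁ + ⋯ + x_{k-1} = (k-1)x_k` has all digit vectors equal. -/
theorem sphere_digits_force_trivial (M d k N : ℕ) (hM : 2 ≤ M) (hd : 1 ≤ d)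
    (hk : 3 ≤ k) (A : Finset ℕ) (hA : A ⊆ Finset.Icc 1 N) (r : ℕ)
    (hsphere : ∀ n ∈ A, ∑ i : Fin d, (digitVec M d n i) ^ 2 = r)
    (hsmall : ∀ n ∈ A, ∀ i : Fin d, k * digitVec M d n i < M)
    (x : Fin k → ℕ) (hx : ∀ i, x i ∈ A)
    (heq : (∑ i ∈ Finset.univ.filter fun i : Fin k => (i : ℕ) < k - 1, x i)
      = (k - 1) * x ⟨k - 1, by omega⟩) :
    ∀ i j : Fin k, digitVec M d (x i) = digitVec M d (x j) := by
  set S : Finset (Fin k) := Finset.univ.filter fun i : Fin k => (i : ℕ) < k - 1 with hS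
  set xl : ℕ := x ⟨k - 1, by omega⟩ with hxl
  -- card of S
  have hcard : S.card = k - 1 := by
    have : S = Finset.Iio (⟨k - 1, by omega⟩ : Fin k) := by
      ext i; simp [hS, Fin.lt_def]
    rw [this, Fin.card_Iio]
  -- digit bounds for elements of A at positions < d
  have hdig : ∀ n ∈ A, ∀ t < d, k * (n / M ^ t % M) < M := by
    intro n hn t ht
    exact hsmall n hn ⟨t, ht⟩
  -- digit sums of the family x over S are < M at positions < d
  have hnc1 : ∀ t < d, ∑ i ∈ S, x i / M ^ t % M < M := by
    intro t ht
    have : k * ∑ i ∈ S, x i / M ^ t % M < k * M := by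
      rw [Finset.mul_sum]
      calc ∑ i ∈ S, k * (x i / M ^ t % M) ≤ ∑ i ∈ S, (M - 1) :=
            Finset.sum_le_sum fun i _ => Nat.le_sub_one_of_lt (hdig (x i) (hx i) t ht)
        _ = S.card * (M - 1) := by rw [Finset.sum_const, smul_eq_mul]
        _ < k * M := by
            rw [hcard]
            exact lt_of_le_of_lt (Nat.mul_le_mul_left _ (Nat.sub_le M 1))
              (Nat.mul_lt_mul_of_pos_right (by omega) (by omega))
    exact Nat.lt_of_mul_lt_mul_left this
  have hnc2 : ∀ t < d, ∑ _i ∈ S, xl / M ^ t % M < M := by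
    intro t ht
    have h1 : k * (xl / M ^ t % M) < M := hdig xl (hx _) t ht
    calc ∑ _i ∈ S, xl / M ^ t % M = (k - 1) * (xl / M ^ t % M) := by
          rw [Finset.sum_const, smul_eq_mul, hcard]
      _ ≤ k * (xl / M ^ t % M) := Nat.mul_le_mul_right _ (by omega)
      _ < M := h1
  -- digit equation at each position j < d
  have hdigeq : ∀ j : Fin d,
      ∑ i ∈ S, digitVec M d (x i) j = (k - 1) * digitVec M d xl j := by
    intro j
    have hj : (j : ℕ) < d := j.2
    have e1 : (∑ i ∈ S, x i) / M ^ (j : ℕ) % M = ∑ i ∈ S, x i / M ^ (j : ℕ) % M :=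
      digit_sum_eq S x M hM j (fun t ht => hnc1 t (by omega))
    have e2 : (∑ _i ∈ S, xl) / M ^ (j : ℕ) % M = ∑ _i ∈ S, xl / M ^ (j : ℕ) % M :=
      digit_sum_eq S (fun _ => xl) M hM j (fun t ht => hnc2 t (by omega))
    have hsum2 : (∑ _i ∈ S, xl) = (k - 1) * xl := by
      rw [Finset.sum_const, smul_eq_mul, hcard]
    rw [hsum2] at e2
    have : (∑ i ∈ S, x i) / M ^ (j : ℕ) % M = ((k - 1) * xl) / M ^ (j : ℕ) % M := by
      rw [heq]
    rw [e1, e2] at this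
    simpa [digitVec, Finset.sum_const, smul_eq_mul, hcard] using this
  -- integer convexity step
  have key : ∀ i ∈ S, digitVec M d (x i) = digitVec M d xl := by
    intro i hi
    have hi' : ∀ i ∈ S, ∀ j : Fin d,
        ((digitVec M d (x i) j : ℤ) - (digitVec M d xl j : ℤ)) ^ 2 = 0 := by
      have htot : ∑ i ∈ S, ∑ j : Fin d,
          ((digitVec M d (x i) j : ℤ) - (digitVec M d xl j : ℤ)) ^ 2 = 0 := by
        have expand : ∀ i ∈ S, ∑ j : Fin d,
            ((digitVec M d (x i) j : ℤ) - (digitVec M d xl j : ℤ)) ^ 2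
            = 2 * r - 2 * ∑ j : Fin d, (digitVec M d (x i) j : ℤ) * (digitVec M d xl j : ℤ) := by
          intro i hi
          have hr1 : ∑ j : Fin d, (digitVec M d (x i) j : ℤ) ^ 2 = r := by
            exact_mod_cast congrArg (Nat.cast : ℕ → ℤ) (hsphere (x i) (hx i))
          have hr2 : ∑ j : Fin d, (digitVec M d xl j : ℤ) ^ 2 = r := by
            exact_mod_cast congrArg (Nat.cast : ℕ → ℤ) (hsphere xl (hx _))
          have : ∑ j : Fin d, ((digitVec M d (x i) j : ℤ) - (digitVec M d xl j : ℤ)) ^ 2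
              = ∑ j : Fin d, ((digitVec M d (x i) j : ℤ) ^ 2
                - 2 * ((digitVec M d (x i) j : ℤ) * (digitVec M d xl j : ℤ))
                + (digitVec M d xl j : ℤ) ^ 2) := by
            apply Finset.sum_congr rfl; intros; ring
          rw [this, Finset.sum_add_distrib, Finset.sum_sub_distrib, hr1, hr2,
            ← Finset.mul_sum]
          ring
        have cross : ∑ i ∈ S, ∑ j : Fin d,
            (digitVec M d (x i) j : ℤ) * (digitVec M d xl j : ℤ) = (k - 1 : ℕ) * r := by
          rw [Finset.sum_comm]
          have : ∀ j : Fin d, ∑ i ∈ S, (digitVec M d (x i) j : ℤ) * (digitVec M d xl j : ℤ)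
              = ((k - 1 : ℕ) : ℤ) * (digitVec M d xl j : ℤ) ^ 2 := by
            intro j
            rw [← Finset.sum_mul]
            have := hdigeq j
            have hcast : ∑ i ∈ S, (digitVec M d (x i) j : ℤ)
                = ((k - 1 : ℕ) : ℤ) * (digitVec M d xl j : ℤ) := by
              exact_mod_cast congrArg (Nat.cast : ℕ → ℤ) this
            rw [hcast]; ring
          rw [Finset.sum_congr rfl fun j _ => this j, ← Finset.mul_sum]
          have hr2 : ∑ j : Fin d, (digitVec M d xl j : ℤ) ^ 2 = r := by
            exact_mod_cast congrArg (Nat.cast : ℕ → ℤ) (hsphere xl (hx _))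
          rw [hr2]
        rw [Finset.sum_congr rfl expand, Finset.sum_sub_distrib]
        have hconst : ∑ _i ∈ S, (2 * r : ℤ) = ((k - 1 : ℕ) : ℤ) * (2 * r) := by
          rw [Finset.sum_const, hcard, nsmul_eq_mul]
        rw [hconst, ← Finset.mul_sum, cross]
        ring
      have hnn : ∀ i ∈ S, 0 ≤ ∑ j : Fin d,
          ((digitVec M d (x i) j : ℤ) - (digitVec M d xl j : ℤ)) ^ 2 :=
        fun i _ => Finset.sum_nonneg fun j _ => sq_nonneg _
      have h0 := (Finset.sum_eq_zero_iff_of_nonneg hnn).mp htot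
      intro i hi j
      have := (Finset.sum_eq_zero_iff_of_nonneg
        (fun j (_ : j ∈ Finset.univ) => sq_nonneg
          ((digitVec M d (x i) j : ℤ) - (digitVec M d xl j : ℤ)))).mp (h0 i hi)
      exact this j (Finset.mem_univ j)
    funext j
    have := hi' i hi j
    have := pow_eq_zero_iff (n := 2) (by norm_num) |>.mp this
    have : (digitVec M d (x i) j : ℤ) = (digitVec M d xl j : ℤ) := by omega
    exact_mod_cast this
  -- conclude
  have all : ∀ i : Fin k, digitVec M d (x i) = digitVec M d xl := by
    intro i
    by_cases h : (i : ℕ) < k - 1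
    · exact key i (by simp [hS, h])
    · have : i = ⟨k - 1, by omega⟩ := by
        apply Fin.ext; have := i.2; simp; omega
      rw [this]
  intro i j
  rw [all i, all j]
end
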